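/- arXiv:1303.4312 — 5 statements merged into one kernel-verified Lean document; each statement's English description precedes it below -/
import Mathlib

section
/- For any index i with 0 ≤ i ≤ m+n, there exists a pair (j,k) with 0 ≤ j ≤ m, 0 ≤ k ≤ n, and j+k = i such that (j = 0 or A(j-1) ≤ B(k)) and (k = 0 or B(k-1) < A(j)), where out-of-range accesses A(m) and B(n) are treated as +∞. -/
/-- Extend a function on `Fin m` to `ℕ` by `+∞` beyond its domain. -/
def extendTop {α : Type*} [LinearOrder α] {m : ℕ} (A : Fin m → α) (j : ℕ) : WithTop α :=
  if h : j < m then ((A ⟨j, h⟩ : α) : WithTop α) else ⊤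

/-- The co-rank conditions for a pair `(j,k)` with `j + k = i`. -/
def IsCoRank {α : Type*} [LinearOrder α] {m n : ℕ} (A : Fin m → α) (B : Fin n → α)
    (i j k : ℕ) : Prop :=
  j + k = i ∧ j ≤ m ∧ k ≤ n ∧
  (j = 0 ∨ extendTop A (j - 1) ≤ extendTop B k) ∧
  (k = 0 ∨ extendTop B (k - 1) < extendTop A j)

lemma extendTop_mono {α : Type*} [LinearOrder α] {m : ℕ} {A : Fin m → α}
    (hA : Monotone A) : Monotone (extendTop A) := by
  intro a b hab
  unfold extendTop
  split_ifs with h1 h2 h2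
  · exact_mod_cast hA hab
  · exact le_top
  · exact absurd (lt_of_le_of_lt hab h2) h1
  · exact le_rfl

lemma extendTop_lt_top {α : Type*} [LinearOrder α] {m : ℕ} {A : Fin m → α}
    {j : ℕ} (h : j < m) : extendTop A j < ⊤ := by
  simp [extendTop, h]

lemma extendTop_eq_top {α : Type*} [LinearOrder α] {m : ℕ} {A : Fin m → α}
    {j : ℕ} (h : m ≤ j) : extendTop A j = ⊤ := by
  simp [extendTop, Nat.not_lt.mpr h]

theorem corank_exists {α : Type*} [LinearOrder α] {m n : ℕ}
    (A : Fin m → α) (B : Fin n → α) (hA : Monotone A) (hB : Monotone B)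
    (i : ℕ) (hi : i ≤ m + n) :
    ∃ j k, IsCoRank A B i j k := by
  induction i with
  | zero => exact ⟨0, 0, rfl, Nat.zero_le _, Nat.zero_le _, Or.inl rfl, Or.inl rfl⟩
  | succ i ih =>
    obtain ⟨j, k, hjk, hjm, hkn, hAj, hBk⟩ := ih (Nat.le_of_succ_le hi)
    rcases le_or_gt (extendTop A j) (extendTop B k) with h | h
    · -- increment j
      have hjm' : j < m := by
        by_contra hc
        push_neg at hc
        have hkn' : k < n ∨ k = n := lt_or_eq_of_le hkn
        rcases hkn' with hk | hk
        · exact absurd (lt_of_le_of_lt h (extendTop_lt_top hk)) (by simp [extendTop_eq_top hc])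
        · omega
      refine ⟨j + 1, k, by omega, hjm', hkn, Or.inr ?_, ?_⟩
      · simpa using h
      · rcases hBk with h0 | hlt
        · exact Or.inl h0
        · exact Or.inr (lt_of_lt_of_le hlt (extendTop_mono hA (Nat.le_succ j)))
    · -- increment k
      have hkn' : k < n := by
        by_contra hc
        push_neg at hc
        rw [extendTop_eq_top hc] at h
        exact absurd h (not_lt.mpr le_top)
      refine ⟨j, k + 1, by omega, hjm, hkn', ?_, Or.inr (by simpa using h)⟩
      rcases hAj with h0 | hle
      · exact Or.inl h0
      · exact Or.inr (le_trans hle (extendTop_mono hB (Nat.le_succ k)))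
end

section
/- For any index i with 0 ≤ i ≤ m+n, the pair (j,k) with j+k = i, 0 ≤ j ≤ m, 0 ≤ k ≤ n satisfying the co-rank conditions (j = 0 or A(j-1) ≤ B(k)) and (k = 0 or B(k-1) < A(j)) is unique: if (j₁,k₁) and (j₂,k₂) both satisfy them with j₁+k₁ = j₂+k₂ = i, then j₁ = j₂ and k₁ = k₂. -/
lemma corank_aux {α : Type*} [LinearOrder α] {m n : ℕ}
    {A : Fin m → α} {B : Fin n → α} (hA : Monotone A) (hB : Monotone B)
    {i j₁ k₁ j₂ k₂ : ℕ}
    (h₁ : IsCoRank A B i j₁ k₁) (h₂ : IsCoRank A B i j₂ k₂) (hlt : j₁ < j₂) : False := by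
  obtain ⟨hs₁, -, -, -, hk₁⟩ := h₁
  obtain ⟨hs₂, -, -, hj₂, -⟩ := h₂
  have hj₂0 : j₂ ≠ 0 := by omega
  have hk₁0 : k₁ ≠ 0 := by omega
  have hAB : extendTop A (j₂ - 1) ≤ extendTop B k₂ := hj₂.resolve_left hj₂0
  have hBA : extendTop B (k₁ - 1) < extendTop A j₁ := hk₁.resolve_left hk₁0
  have h1 : extendTop A j₁ ≤ extendTop A (j₂ - 1) := extendTop_mono hA (by omega)
  have h2 : extendTop B k₂ ≤ extendTop B (k₁ - 1) := extendTop_mono hB (by omega)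
  exact absurd (hBA.trans_le (h1.trans (hAB.trans h2))) (lt_irrefl _)

theorem corank_unique {α : Type*} [LinearOrder α] {m n : ℕ}
    (A : Fin m → α) (B : Fin n → α) (hA : Monotone A) (hB : Monotone B)
    (i : ℕ) (hi : i ≤ m + n) (j₁ k₁ j₂ k₂ : ℕ)
    (h₁ : IsCoRank A B i j₁ k₁) (h₂ : IsCoRank A B i j₂ k₂) :
    j₁ = j₂ ∧ k₁ = k₂ := by
  have hs₁ := h₁.1
  have hs₂ := h₂.1
  rcases lt_trichotomy j₁ j₂ with h | h | h
  · exact absurd (corank_aux hA hB h₁ h₂ h) id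
  · constructor <;> omega
  · exact absurd (corank_aux hA hB h₂ h₁ h) id
end

section
/- Define the co-rank j(i) for each 0 ≤ i ≤ m+n as the unique j such that (j, i-j) satisfies the co-rank conditions. Then i ↦ j(i) is monotone nondecreasing, and consequently i ↦ i - j(i) (the co-rank k(i)) is also monotone nondecreasing. -/
theorem corank_monotone {α : Type*} [LinearOrder α] {m n : ℕ}
    (A : Fin m → α) (B : Fin n → α) (hA : Monotone A) (hB : Monotone B)
    (J : ℕ → ℕ) (hJ : ∀ i ≤ m + n, IsCoRank A B i (J i) (i - J i)) :
    ∀ i₁ i₂, i₁ ≤ i₂ → i₂ ≤ m + n → J i₁ ≤ J i₂ ∧ i₁ - J i₁ ≤ i₂ - J i₂ := by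
  have step : ∀ i, i + 1 ≤ m + n → J i ≤ J (i + 1) ∧ J (i + 1) ≤ J i + 1 := by
    intro i hi
    obtain ⟨e1, _, _, c1, c1'⟩ := hJ i (by omega)
    obtain ⟨e2, _, _, c2, c2'⟩ := hJ (i + 1) hi
    have hle : J i ≤ i := by omega
    have hle' : J (i + 1) ≤ i + 1 := by omega
    constructor
    · by_contra hlt
      push_neg at hlt
      have hj0 : J i ≠ 0 := by omega
      have hk'0 : (i + 1) - J (i + 1) ≠ 0 := by omega
      have h1 : extendTop A (J i - 1) ≤ extendTop B (i - J i) := c1.resolve_left hj0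
      have h2 : extendTop B ((i + 1) - J (i + 1) - 1) < extendTop A (J (i + 1)) :=
        c2'.resolve_left hk'0
      have m1 : extendTop A (J (i + 1)) ≤ extendTop A (J i - 1) :=
        extendTop_mono hA (by omega)
      have m2 : extendTop B (i - J i) ≤ extendTop B ((i + 1) - J (i + 1) - 1) :=
        extendTop_mono hB (by omega)
      exact absurd ((h1.trans m2).trans_lt (h2.trans_le m1)) (lt_irrefl _)
    · by_contra hgt
      push_neg at hgt
      have hj'0 : J (i + 1) ≠ 0 := by omega
      have hk0 : i - J i ≠ 0 := by omega
      have h1 : extendTop A (J (i + 1) - 1) ≤ extendTop B ((i + 1) - J (i + 1)) :=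
        c2.resolve_left hj'0
      have h2 : extendTop B (i - J i - 1) < extendTop A (J i) := c1'.resolve_left hk0
      have m1 : extendTop A (J i) ≤ extendTop A (J (i + 1) - 1) :=
        extendTop_mono hA (by omega)
      have m2 : extendTop B ((i + 1) - J (i + 1)) ≤ extendTop B (i - J i - 1) :=
        extendTop_mono hB (by omega)
      exact absurd ((h2.trans_le m1).trans_le (h1.trans m2)) (lt_irrefl _)
  have key : ∀ d i₁, i₁ + d ≤ m + n → J i₁ ≤ J (i₁ + d) ∧ J (i₁ + d) ≤ J i₁ + d := by
    intro d
    induction d with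
    | zero => intro i₁ _; simp
    | succ d ih =>
      intro i₁ h
      obtain ⟨h1, h2⟩ := ih i₁ (by omega)
      obtain ⟨h3, h4⟩ := step (i₁ + d) (by omega)
      have e : i₁ + (d + 1) = i₁ + d + 1 := by omega
      rw [e]
      omega
  intro i₁ i₂ h12 h2
  obtain ⟨k1, k2⟩ := key (i₂ - i₁) i₁ (by omega)
  rw [show i₁ + (i₂ - i₁) = i₂ by omega] at k1 k2
  have e1 := (hJ i₁ (by omega)).1
  have e2 := (hJ i₂ h2).1
  exact ⟨k1, by omega⟩
end

section
/- Let C be the stable merge of sorted lists A and B (merging with ≤, taking from A on ties). Then for every i ≤ length A + length B, the length-i prefix of C equals the stable merge of the length-j(i) prefix of A and the length-k(i) prefix of B, where (j(i), k(i)) is the unique co-rank pair for i. -/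
/-- List indexing into `WithTop α`: out-of-range accesses are `+∞`. -/
def getTop {α : Type*} [LinearOrder α] (A : List α) (j : ℕ) : WithTop α :=
  ((A[j]?).map (fun a => (a : WithTop α))).getD ⊤

/-- The co-rank conditions for a pair `(j,k)` with `j + k = i`. -/
def IsCoRankL {α : Type*} [LinearOrder α] (A B : List α) (i j k : ℕ) : Prop :=
  j + k = i ∧ j ≤ A.length ∧ k ≤ B.length ∧
  (j = 0 ∨ getTop A (j - 1) ≤ getTop B k) ∧
  (k = 0 ∨ getTop B (k - 1) < getTop A j)

lemma getTop_cons_succ {α : Type*} [LinearOrder α] (a : α) (A : List α) (m : ℕ) :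
    getTop (a :: A) (m + 1) = getTop A m := by
  simp [getTop]

lemma getTop_cons_zero {α : Type*} [LinearOrder α] (a : α) (A : List α) :
    getTop (a :: A) 0 = (a : WithTop α) := by
  simp [getTop]

lemma head_le_getTop {α : Type*} [LinearOrder α] {a : α} {A : List α}
    (hs : (a :: A).Pairwise (· ≤ ·)) (m : ℕ) :
    (a : WithTop α) ≤ getTop (a :: A) m := by
  rcases lt_or_ge m (a :: A).length with h | h
  · have e : getTop (a :: A) m = (((a :: A)[m] : α) : WithTop α) := by
      rw [getTop, List.getElem?_eq_getElem h]; rfl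
    rw [e, WithTop.coe_le_coe]
    rcases Nat.eq_zero_or_pos m with rfl | hm
    · simp
    · exact List.pairwise_iff_getElem.mp hs 0 m (by simp) h hm
  · rw [getTop, List.getElem?_eq_none h]
    simp

lemma merge_take_corank_aux {α : Type*} [LinearOrder α] :
    ∀ (i : ℕ) (A B : List α), A.Pairwise (· ≤ ·) → B.Pairwise (· ≤ ·) →
      ∀ j k, IsCoRankL A B i j k →
      (A.merge B (· ≤ ·)).take i = (A.take j).merge (B.take k) (· ≤ ·) := by
  intro i
  induction i with
  | zero =>
    intro A B _ _ j k ⟨hjk, _⟩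
    obtain ⟨rfl, rfl⟩ : j = 0 ∧ k = 0 := by omega
    simp
  | succ i ih =>
    intro A B hA hB j k hco0
    obtain ⟨hjk, hjA, hkB, h1, h2⟩ := hco0
    cases A with
    | nil =>
      have hj : j = 0 := by simpa using hjA
      subst hj
      have hk : k = i + 1 := by omega
      subst hk
      simp [List.nil_merge]
    | cons a A' =>
    cases B with
    | nil =>
      have hk : k = 0 := by simpa using hkB
      subst hk
      have hj : j = i + 1 := by omega
      have e1 : (a :: A').merge ([] : List α) (fun x1 x2 => decide (x1 ≤ x2)) = a :: A' := by
        simp [List.merge]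
      have e2 : (List.take j (a :: A')).merge (List.take 0 ([] : List α))
          (fun x1 x2 => decide (x1 ≤ x2)) = List.take j (a :: A') := by
        cases List.take j (a :: A') <;> simp [List.merge]
      rw [e1, e2, hj]
    | cons b B' =>
      by_cases hab : a ≤ b
      · -- j ≠ 0
        have hj : j ≠ 0 := by
          rintro rfl
          have hk : k ≠ 0 := by omega
          have h2' := h2.resolve_left hk
          rw [getTop_cons_zero] at h2'
          have hb : (b : WithTop α) ≤ getTop (b :: B') (k - 1) := head_le_getTop hB _
          have : (b : WithTop α) < (a : WithTop α) := lt_of_le_of_lt hb h2'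
          exact absurd hab (by exact_mod_cast not_le.mpr (by exact_mod_cast this))
        obtain ⟨j', rfl⟩ : ∃ j', j = j' + 1 := ⟨j - 1, by omega⟩
        have hco : IsCoRankL A' (b :: B') i j' k := by
          refine ⟨by omega, by simpa using hjA, hkB, ?_, ?_⟩
          · rcases Nat.eq_zero_or_pos j' with rfl | hj'
            · exact Or.inl rfl
            · right
              have h1' := h1.resolve_left (by omega)
              have : getTop (a :: A') (j' + 1 - 1) = getTop A' (j' - 1) := by
                obtain ⟨m, rfl⟩ : ∃ m, j' = m + 1 := ⟨j' - 1, by omega⟩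
                simpa using getTop_cons_succ a A' m
              rwa [this] at h1'
          · rcases h2 with h2 | h2
            · exact Or.inl h2
            · right; rwa [getTop_cons_succ] at h2
        have IH := ih A' (b :: B') hA.of_cons hB j' k hco
        rw [List.cons_merge_cons]
        simp only [decide_eq_true_eq, hab, if_true]
        rw [List.take_succ_cons, List.take_succ_cons, IH]
        rcases Nat.eq_zero_or_pos k with rfl | hk
        · simp only [List.take_zero]
          cases h' : List.take j' A' <;> simp [List.merge]
        · obtain ⟨k', rfl⟩ : ∃ k', k = k' + 1 := ⟨k - 1, by omega⟩
          rw [List.take_succ_cons, List.cons_merge_cons]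
          simp [hab]
      · -- k ≠ 0
        have hk : k ≠ 0 := by
          rintro rfl
          have hj : j ≠ 0 := by omega
          have h1' := h1.resolve_left hj
          rw [getTop_cons_zero] at h1'
          have ha : (a : WithTop α) ≤ getTop (a :: A') (j - 1) := head_le_getTop hA _
          have : (a : WithTop α) ≤ (b : WithTop α) := le_trans ha h1'
          exact hab (by exact_mod_cast this)
        obtain ⟨k', rfl⟩ : ∃ k', k = k' + 1 := ⟨k - 1, by omega⟩
        have hco : IsCoRankL (a :: A') B' i j k' := by
          refine ⟨by omega, hjA, by simpa using hkB, ?_, ?_⟩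
          · rcases h1 with h1 | h1
            · exact Or.inl h1
            · right; rwa [getTop_cons_succ] at h1
          · rcases Nat.eq_zero_or_pos k' with rfl | hk'
            · exact Or.inl rfl
            · right
              have h2' := h2.resolve_left (by omega)
              have : getTop (b :: B') (k' + 1 - 1) = getTop B' (k' - 1) := by
                obtain ⟨m, rfl⟩ : ∃ m, k' = m + 1 := ⟨k' - 1, by omega⟩
                simpa using getTop_cons_succ b B' m
              rwa [this] at h2'
        have IH := ih (a :: A') B' hA hB.of_cons j k' hco
        rw [List.cons_merge_cons]
        simp only [decide_eq_true_eq, hab, if_false]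
        rw [List.take_succ_cons, List.take_succ_cons, IH]
        rcases Nat.eq_zero_or_pos j with rfl | hj
        · simp [List.nil_merge]
        · obtain ⟨j', rfl⟩ : ∃ j', j = j' + 1 := ⟨j - 1, by omega⟩
          rw [List.take_succ_cons, List.cons_merge_cons]
          simp [hab]

theorem merge_take_corank {α : Type*} [LinearOrder α]
    (A B : List α) (hA : A.Pairwise (· ≤ ·)) (hB : B.Pairwise (· ≤ ·))
    (i j k : ℕ) (hi : i ≤ A.length + B.length)
    (h : IsCoRankL A B i j k) :
    (A.merge B (· ≤ ·)).take i = (A.take j).merge (B.take k) (· ≤ ·) := by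
  exact merge_take_corank_aux i A B hA hB j k h
end

section
/- Algorithm correctness for the binary-search co-ranking loop: if at some point j + k = i, max(0, i-n) ≤ j_low ≤ j ≤ min(i,m), k_low ≤ k, and the unique co-rank pair (j*, k*) for i satisfies j_low ≤ j* ≤ j or k_low ≤ k* ≤ k, and the first co-rank condition is violated (j > 0, k < n, A(j-1) > B(k)), then after updating δ = ⌈(j - j_low)/2⌉, k_low' = k, j' = j - δ, k' = k + δ, the invariant j_low ≤ j* ≤ j' or k_low' ≤ k* ≤ k' still holds. -/
theorem corank_search_invariant {α : Type*} [LinearOrder α] {m n : ℕ}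
    (A : Fin m → α) (B : Fin n → α) (hA : Monotone A) (hB : Monotone B)
    (i jstar kstar j k jlow klow : ℕ)
    (hstar : IsCoRank A B i jstar kstar)
    (hjk : j + k = i) (hjlow₁ : i - n ≤ jlow) (hjlow₂ : jlow ≤ j)
    (hj : j ≤ min i m) (hklow : klow ≤ k)
    (hinv : (jlow ≤ jstar ∧ jstar ≤ j) ∨ (klow ≤ kstar ∧ kstar ≤ k))
    (hviol₁ : 0 < j) (hviol₂ : k < n)
    (hviol₃ : extendTop B k < extendTop A (j - 1)) :
    (jlow ≤ jstar ∧ jstar ≤ j - (j - jlow + 1) / 2) ∨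
    (k ≤ kstar ∧ kstar ≤ k + (j - jlow + 1) / 2) := by
  obtain ⟨hsum, hjm, hkn, hc1, hc2⟩ := hstar
  have hlt : jstar < j := by
    by_contra h
    push_neg at h
    have hks : kstar ≤ k := by omega
    have hj0 : jstar ≠ 0 := by omega
    rcases hc1 with h0 | hle
    · exact hj0 h0
    have h1 : extendTop A (j - 1) ≤ extendTop A (jstar - 1) :=
      extendTop_mono hA (by omega)
    have h2 : extendTop B kstar ≤ extendTop B k := extendTop_mono hB hks
    exact absurd (h1.trans (hle.trans h2)) (not_le.mpr hviol₃)
  omega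
end
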